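/- arXiv:2504.17443 — 5 statements merged into one kernel-verified Lean document; each statement's English description precedes it below -/
import Mathlib

section
/- Let μ : {a,b}* → {a,b}* be an injective morphism. Then μ is primitivity-preserving if and only if for all morphisms ψ, χ : {a,b}* → {a,b}* such that μ = ψ ∘ χ, writing χ = (p, q), the morphism χ is primitivity-preserving and ψ is an injective morphism with P^ψ ∩ {p, q}⁺ = ∅ (no ψ-power is a nonempty concatenation of copies of p and q). -/
/-!
The heart of the matter is the defect theorem for two words: `ψ = (x, y)` is injective unless
`xy = yx`, and then all `ψ`-images commute, so `μ = ψ ∘ χ` would identify `ab` and `ba`.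
Primitivity passes backwards through any morphism (`χ(z)^k = χ(z^k)`), which makes `χ`
primitivity-preserving and shows that a `ψ`-power `χ(l)` would give an imprimitive `μ(l)` with
`l` primitive. Conversely, the factorization `μ = μ ∘ id` shows that no primitive word has an
imprimitive `μ`-image.
-/

/-- `wpow z k` is the word `z` repeated `k` times, i.e. `z^k`. -/
def wpow {α : Type*} (z : List α) (k : ℕ) : List α := (List.replicate k z).flatten

/-- Apply the morphism determined by the letter images `f` to the word `w`. -/
def mApply {α β : Type*} (f : α → List β) (w : List α) : List β := w.flatMap f

/-- A nonempty word is primitive if it is a `k`-th power only for `k = 1`. -/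
def Primitive {α : Type*} (w : List α) : Prop :=
  w ≠ [] ∧ ∀ (z : List α) (k : ℕ), w = wpow z k → k = 1

/-- A morphism is primitivity-preserving if it maps primitive words to primitive words. -/
def PrimPreserving {α β : Type*} (f : α → List β) : Prop :=
  ∀ w, Primitive w → Primitive (mApply f w)

/-- A primitive word `w` is a `μ`-power (for `μ` given by letter images `f`)
if `μ(w) = z^k` for a primitive `z` and `k > 1`.  `P^μ = {w | MuPower f w}`. -/
def MuPower {α β : Type*} (f : α → List β) (w : List α) : Prop :=
  Primitive w ∧ ∃ (z : List β) (k : ℕ), Primitive z ∧ 1 < k ∧ mApply f w = wpow z k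

/-- `u` is a circular factor of `w`: a factor of some rotation of `w`. -/
def CircFactor {α : Type*} (u w : List α) : Prop :=
  ∃ w', w ~r w' ∧ u <:+: w'

/-- The set of circular factors of words in the language `L`. -/
def CircFactLang {α : Type*} (L : Set (List α)) : Set (List α) :=
  {u | ∃ w ∈ L, CircFactor u w}

/-- `(u₁, u₂)` is a synchronization pair of `u₁ ++ u₂` on `μ(L)`. -/
def SyncPair {α β : Type*} (f : α → List β) (L : Set (List α)) (u₁ u₂ : List β) : Prop :=
  ∀ (v₁ v₂ : List β) (g : List α), g ∈ CircFactLang L →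
    v₁ ++ (u₁ ++ u₂) ++ v₂ = mApply f g →
    ∃ g₁ ∈ CircFactLang L, ∃ g₂ ∈ CircFactLang L,
      g₁ ++ g₂ = g ∧ v₁ ++ u₁ = mApply f g₁ ∧ u₂ ++ v₂ = mApply f g₂

/-- `u` admits a synchronization pair on `μ(L)`. -/
def HasSyncPair {α β : Type*} (f : α → List β) (L : Set (List α)) (u : List β) : Prop :=
  ∃ u₁ u₂, u = u₁ ++ u₂ ∧ SyncPair f L u₁ u₂

/-- `μ` is synchronizing with finite delay on `μ(L)`. -/
def SyncFiniteDelay {α β : Type*} (f : α → List β) (L : Set (List α)) : Prop :=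
  ∃ K : ℕ, 0 < K ∧ ∀ w ∈ L, ∀ u, CircFactor u (mApply f w) → K ≤ u.length →
    HasSyncPair f L u

/-- An (injective) morphism is recognizable: every nonempty word in the image and every
rotation of it has a unique factorization `w' = q ⬝ μ(z) ⬝ p` with `p ⬝ q = μ(c)`, `p ≠ ε`. -/
def Recognizable {α β : Type*} (f : α → List β) : Prop :=
  ∀ w ∈ Set.range (mApply f), w ≠ [] → ∀ w', w ~r w' →
    ∃! pqzc : List β × List β × List α × α,
      pqzc.1 ≠ [] ∧ w' = pqzc.2.1 ++ mApply f pqzc.2.2.1 ++ pqzc.1 ∧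
        pqzc.1 ++ pqzc.2.1 = f pqzc.2.2.2

/-- The Burrows–Wheeler transform: last letters of the lexicographically sorted rotations. -/
def bwt {Γ : Type*} [LinearOrder Γ] (w : List Γ) : List Γ :=
  (List.insertionSort (· ≤ ·) ((List.range w.length).map (fun i => w.rotate i))).filterMap
    List.getLast?

/-- The number of maximal runs of equal consecutive letters. -/
def runCount {Γ : Type*} [DecidableEq Γ] (l : List Γ) : ℕ :=
  (l.destutter (· ≠ ·)).length

/-- `r(w)`: the number of BWT-runs of `w`. -/
def rBWT {Γ : Type*} [LinearOrder Γ] (w : List Γ) : ℕ := runCount (bwt w)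

/-- The morphism `ρ_p = (a, b^p)`, with `a = false`, `b = true`. -/
def rho (p : ℕ) : Bool → List Bool := fun c => bif c then List.replicate p true else [false]

/-- The exchange morphism `E = (b, a)`. -/
def Eswap : Bool → List Bool := fun c => [!c]

section Words

variable {α β γ : Type*}

@[simp] theorem mApply_nil (f : α → List β) : mApply f [] = [] := rfl

@[simp] theorem mApply_cons (f : α → List β) (c : α) (w : List α) :
    mApply f (c :: w) = f c ++ mApply f w := rfl

@[simp] theorem mApply_append (f : α → List β) (x y : List α) :
    mApply f (x ++ y) = mApply f x ++ mApply f y := by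
  simp [mApply]

@[simp] theorem mApply_singleton (w : List α) : mApply (fun c => [c]) w = w :=
  List.flatMap_singleton' w

theorem mApply_mApply (ψ : β → List γ) (χ : α → List β) (w : List α) :
    mApply ψ (mApply χ w) = mApply (fun c => mApply ψ (χ c)) w := by
  induction w with
  | nil => rfl
  | cons c w ih => simp [ih]

@[simp] theorem wpow_zero (z : List α) : wpow z 0 = [] := rfl

theorem wpow_succ (z : List α) (k : ℕ) : wpow z (k + 1) = z ++ wpow z k := by
  simp [wpow, List.replicate_succ]

@[simp] theorem wpow_one (z : List α) : wpow z 1 = z := by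
  simp [wpow_succ]

@[simp] theorem wpow_nil (k : ℕ) : wpow ([] : List α) k = [] := by
  simp [wpow]

theorem wpow_add (z : List α) (a b : ℕ) : wpow z (a + b) = wpow z a ++ wpow z b := by
  rw [wpow, wpow, wpow, List.replicate_add, List.flatten_append]

theorem length_wpow (z : List α) (k : ℕ) : (wpow z k).length = k * z.length := by
  simp [wpow, List.length_flatten]

theorem wpow_mul (z : List α) (m k : ℕ) : wpow (wpow z m) k = wpow z (k * m) := by
  induction k with
  | zero => simp
  | succ k ih => rw [wpow_succ, ih, Nat.succ_mul, Nat.add_comm, wpow_add]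

theorem mApply_wpow (f : α → List β) (z : List α) (k : ℕ) :
    mApply f (wpow z k) = wpow (mApply f z) k := by
  induction k with
  | zero => rfl
  | succ k ih => rw [wpow_succ, wpow_succ, mApply_append, ih]

end Words

section Primitivity

variable {α β γ : Type*}

theorem Primitive.of_mApply {f : α → List β} {w : List α} (h : Primitive (mApply f w)) :
    Primitive w :=
  ⟨fun hw => h.1 (by simp [hw]), fun z k hz => h.2 (mApply f z) k (by rw [hz, mApply_wpow])⟩

theorem PrimPreserving.of_comp {ψ : β → List γ} {χ : α → List β}
    (h : PrimPreserving fun c => mApply ψ (χ c)) : PrimPreserving χ :=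
  fun w hw => Primitive.of_mApply (f := ψ) (by rw [mApply_mApply]; exact h w hw)

theorem not_muPower_of_primitive_mApply {f : α → List β} {w : List α}
    (h : Primitive (mApply f w)) : ¬ MuPower f w := by
  rintro ⟨-, z, k, -, hk, hzk⟩
  exact hk.ne' (h.2 z k hzk)

theorem exists_wpow_of_not_primitive {w : List α} (hw : w ≠ []) (h : ¬ Primitive w) :
    ∃ y j, y ≠ [] ∧ 1 < j ∧ w = wpow y j := by
  simp only [Primitive, hw, ne_eq, not_false_eq_true, true_and, not_forall] at h
  obtain ⟨y, j, hyj, hj⟩ := h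
  refine ⟨y, j, ?_, ?_, hyj⟩
  · rintro rfl
    exact hw (by simp [hyj])
  · rcases j with _ | _ | j
    · exact absurd hyj hw
    · exact absurd rfl hj
    · omega

theorem exists_primitive_wpow {w : List α} (hw : w ≠ []) :
    ∃ z k, Primitive z ∧ 0 < k ∧ w = wpow z k := by
  by_cases hp : Primitive w
  · exact ⟨w, 1, hp, one_pos, (wpow_one w).symm⟩
  obtain ⟨y, j, hy, hj, rfl⟩ := exists_wpow_of_not_primitive hw hp
  have : y.length < (wpow y j).length := by
    rw [length_wpow]
    have := List.length_pos_iff.mpr hy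
    nlinarith
  obtain ⟨z, m, hz, hm, rfl⟩ := exists_primitive_wpow hy
  exact ⟨z, j * m, hz, by positivity, wpow_mul z m j⟩
termination_by w.length

theorem exists_primitive_wpow_of_not_primitive {w : List α} (hw : w ≠ []) (h : ¬ Primitive w) :
    ∃ z k, Primitive z ∧ 1 < k ∧ w = wpow z k := by
  obtain ⟨y, j, hy, hj, rfl⟩ := exists_wpow_of_not_primitive hw h
  obtain ⟨z, m, hz, hm, rfl⟩ := exists_primitive_wpow hy
  exact ⟨z, j * m, hz, by nlinarith, wpow_mul z m j⟩

end Primitivity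

section BinaryCodes

variable {α : Type*}

def pairMorphism (u v : List α) : Bool → List α := fun c => bif c then v else u

@[simp] theorem pairMorphism_false (u v : List α) : pairMorphism u v false = u := rfl

@[simp] theorem pairMorphism_true (u v : List α) : pairMorphism u v true = v := rfl

theorem pairMorphism_apply_false_true (ψ : Bool → List α) :
    pairMorphism (ψ false) (ψ true) = ψ := by
  funext c; cases c <;> rfl

theorem mApply_pairMorphism_map_not (u v : List α) (w : List Bool) :
    mApply (pairMorphism u v) (w.map not) = mApply (pairMorphism v u) w := by
  induction w with
  | nil => rfl
  | cons c w ih => cases c <;> simp [ih]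

theorem mApply_pairMorphism_append (u s : List α) (w : List Bool) :
    mApply (pairMorphism u (u ++ s)) w =
      mApply (pairMorphism u s) (mApply (pairMorphism [false] [false, true]) w) := by
  rw [mApply_mApply]
  congr 1
  funext c
  cases c <;> simp

/- If `|u| ≤ |v|`, write `v = us`; since `(u, us) = (u, s) ∘ (a, ab)`, cancelling `u` leaves an
equation `u X = s Y` of the same shape for the shorter pair `(u, s)`. -/
theorem append_comm_of_append_mApply_eq (u v : List α) (x y : List Bool)
    (h : u ++ mApply (pairMorphism u v) x = v ++ mApply (pairMorphism u v) y) :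
    u ++ v = v ++ u := by
  induction hn : u.length + v.length using Nat.strong_induction_on generalizing u v x y with
  | _ n ih =>
  wlog huv : u.length ≤ v.length generalizing u v x y
  · refine (this v u (y.map not) (x.map not) ?_ (by omega) (by omega)).symm
    simpa only [mApply_pairMorphism_map_not] using h.symm
  rcases eq_or_ne u [] with rfl | hu
  · simp
  obtain ⟨s, rfl⟩ : u <+: v :=
    List.prefix_of_prefix_length_le (List.prefix_append _ _) (h.symm ▸ List.prefix_append _ _) huv
  rw [List.append_assoc, List.append_cancel_left_eq, mApply_pairMorphism_append,
    mApply_pairMorphism_append] at h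
  cases x with
  | nil =>
    obtain rfl : s = [] := (List.append_eq_nil_iff.mp h.symm).1
    simp
  | cons c x =>
    obtain ⟨t, ht⟩ :
        ∃ t, mApply (pairMorphism [false] [false, true]) (c :: x) = false :: t := by
      cases c <;> exact ⟨_, rfl⟩
    rw [ht, mApply_cons, pairMorphism_false] at h
    have hlt : u.length + s.length < n := by
      have := List.length_pos_iff.mpr hu
      simp only [List.length_append] at hn
      omega
    have hus := ih _ hlt u s t _ h rfl
    rw [hus, ← List.append_assoc, hus]

theorem mApply_pairMorphism_injective {u v : List α} (h : u ++ v ≠ v ++ u) :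
    Function.Injective (mApply (pairMorphism u v)) := by
  have hu : u ≠ [] := by rintro rfl; simp at h
  have hv : v ≠ [] := by rintro rfl; simp at h
  intro x
  induction x with
  | nil =>
    rintro (_ | ⟨d, y⟩) hxy
    · rfl
    · cases d <;> simp_all
  | cons c x ih =>
    rintro (_ | ⟨d, y⟩) hxy
    · cases c <;> simp_all
    by_cases hcd : c = d
    · subst hcd
      rw [mApply_cons, mApply_cons, List.append_cancel_left_eq] at hxy
      rw [ih hxy]
    · obtain ⟨rfl, rfl⟩ | ⟨rfl, rfl⟩ :
          c = false ∧ d = true ∨ c = true ∧ d = false := by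
        cases c <;> cases d <;> simp_all
      · exact absurd (append_comm_of_append_mApply_eq u v x y hxy) h
      · exact absurd (append_comm_of_append_mApply_eq u v y x hxy.symm) h

theorem mApply_append_comm {ψ : Bool → List α} (h : ψ false ++ ψ true = ψ true ++ ψ false)
    (x y : List Bool) : mApply ψ x ++ mApply ψ y = mApply ψ y ++ mApply ψ x := by
  have hletter (c : Bool) : ∀ w, ψ c ++ mApply ψ w = mApply ψ w ++ ψ c := by
    intro w
    induction w with
    | nil => simp
    | cons d w ih =>
      have hcd : ψ c ++ ψ d = ψ d ++ ψ c := by cases c <;> cases d <;> simp [h]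
      rw [mApply_cons, ← List.append_assoc, hcd, List.append_assoc, ih, List.append_assoc]
  induction x with
  | nil => simp
  | cons c x ih =>
    rw [mApply_cons, List.append_assoc, ih, ← List.append_assoc, hletter, List.append_assoc]

theorem mApply_injective_of_injective_comp (ψ : Bool → List α) (χ : Bool → List Bool)
    (h : Function.Injective (mApply fun c => mApply ψ (χ c))) :
    Function.Injective (mApply ψ) := by
  rw [← pairMorphism_apply_false_true ψ]
  refine mApply_pairMorphism_injective fun hcomm => ?_
  have hab := @h [false, true] [true, false]
    (by simpa using mApply_append_comm hcomm (χ false) (χ true))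
  simp at hab

end BinaryCodes

theorem stmt2 (μ : Bool → List Bool) (hinj : Function.Injective (mApply μ)) :
    PrimPreserving μ ↔
      ∀ (ψ χ : Bool → List Bool), (∀ c, μ c = mApply ψ (χ c)) →
        (PrimPreserving χ ∧ Function.Injective (mApply ψ) ∧
          ∀ w, MuPower ψ w → ¬ ∃ l : List Bool, l ≠ [] ∧ w = mApply χ l) := by
  constructor
  · intro hP ψ χ hμ
    obtain rfl : μ = fun c => mApply ψ (χ c) := funext hμ
    refine ⟨hP.of_comp, mApply_injective_of_injective_comp ψ χ hinj, ?_⟩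
    rintro w hw ⟨l, -, rfl⟩
    refine not_muPower_of_primitive_mApply ?_ hw
    rw [mApply_mApply]
    exact hP l hw.1.of_mApply
  · intro h w hw
    obtain ⟨-, -, hno_power⟩ := h μ (fun c => [c]) (fun c => by simp)
    by_contra hnp
    have hne : mApply μ w ≠ [] := fun h0 => hw.1 (hinj (h0.trans (mApply_nil μ).symm))
    obtain ⟨z, k, hz, hk, hzk⟩ := exists_primitive_wpow_of_not_primitive hne hnp
    exact hno_power w ⟨hw, z, k, hz, hk, hzk⟩ ⟨w, hw.1, by simp⟩
end

section
/- Let μ : {a,b}* → Γ* be a non-erasing cyclic morphism, i.e., there exist a nonempty word z ∈ Γ⁺ and integers t₁, t₂ > 0 with μ(a) = z^{t₁} and μ(b) = z^{t₂}. Then there exist constants k⁺_μ and k×_μ, depending only on μ, such that AS_μ(n) = k⁺_μ and MS_μ(n) = k×_μ for all n ≥ 2. -/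
namespace BWTAux
open List

open List

theorem wpow_zero {α : Type*} (z : List α) : wpow z 0 = [] := rfl

theorem wpow_succ {α : Type*} (z : List α) (m : ℕ) : wpow z (m+1) = z ++ wpow z m := by
  simp [wpow, List.replicate_succ]

theorem wpow_succ' {α : Type*} (z : List α) (m : ℕ) : wpow z (m+1) = wpow z m ++ z := by
  simp [wpow, List.replicate_succ']

theorem wpow_one {α : Type*} (z : List α) : wpow z 1 = z := by simp [wpow]

theorem wpow_nil {α : Type*} (m : ℕ) : wpow ([] : List α) m = [] := by
  induction m with
  | zero => rfl
  | succ k ih => rw [wpow_succ, ih]; rfl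

theorem wpow_add {α : Type*} (z : List α) (a b : ℕ) :
    wpow z (a + b) = wpow z a ++ wpow z b := by
  induction a with
  | zero => simp [wpow_zero]
  | succ k ih => rw [Nat.succ_add, wpow_succ, wpow_succ, ih, List.append_assoc]

theorem length_wpow {α : Type*} (z : List α) (m : ℕ) :
    (wpow z m).length = m * z.length := by
  induction m with
  | zero => simp [wpow_zero]
  | succ k ih => rw [wpow_succ, List.length_append, ih, Nat.succ_mul]; omega

theorem wpow_exch {α : Type*} (u v : List α) (m : ℕ) :
    wpow (u ++ v) m ++ u = u ++ wpow (v ++ u) m := by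
  induction m with
  | zero => simp [wpow_zero]
  | succ k ih =>
    rw [wpow_succ, wpow_succ]
    calc (u ++ v) ++ wpow (u ++ v) k ++ u = u ++ (v ++ (wpow (u ++ v) k ++ u)) := by
          simp [List.append_assoc]
      _ = u ++ (v ++ (u ++ wpow (v ++ u) k)) := by rw [ih]
      _ = u ++ ((v ++ u) ++ wpow (v ++ u) k) := by simp [List.append_assoc]

theorem rotate_one_wpow {α : Type*} (z : List α) (m : ℕ) :
    (wpow z m).rotate 1 = wpow (z.rotate 1) m := by
  cases z with
  | nil => simp [wpow_nil]
  | cons a t =>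
    cases m with
    | zero => simp [wpow_zero]
    | succ k =>
      have h1 : (a :: t).rotate 1 = t ++ [a] := by
        simpa using List.rotate_cons_succ t a 0
      rw [h1, wpow_succ, wpow_succ']
      have h2 : (a :: t) ++ wpow (a :: t) k = a :: (t ++ wpow (a :: t) k) := rfl
      rw [h2]
      have h3 : (a :: (t ++ wpow (a :: t) k)).rotate 1 = (t ++ wpow (a :: t) k) ++ [a] := by
        simpa using List.rotate_cons_succ (t ++ wpow (a :: t) k) a 0
      rw [h3]
      have h4 := wpow_exch (t ++ [a]) ([] : List α) k
      have h5 := wpow_exch t [a] k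
      -- wpow (t ++ [a]) k ++ t = t ++ wpow ([a] ++ t) k
      have : wpow (t ++ [a]) k ++ (t ++ [a]) = (t ++ wpow (a :: t) k) ++ [a] := by
        rw [← List.append_assoc, h5]
        simp [List.append_assoc]
      rw [this]

theorem rotate_wpow {α : Type*} (z : List α) (m : ℕ) :
    ∀ j, (wpow z m).rotate j = wpow (z.rotate j) m := by
  intro j
  induction j generalizing z with
  | zero => simp
  | succ k ih =>
    have h1 : (wpow z m).rotate (k+1) = ((wpow z m).rotate 1).rotate k := by
      rw [List.rotate_rotate]; ring_nf
    rw [h1, rotate_one_wpow, ih (z.rotate 1), List.rotate_rotate]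
    ring_nf

theorem map_mod_range {L : ℕ} (m : ℕ) :
    (List.range (m * L)).map (· % L) = wpow (List.range L) m := by
  induction m with
  | zero => simp [wpow_zero]
  | succ k ih =>
    rw [Nat.succ_mul, List.range_add, List.map_append, ih, wpow_succ']
    congr 1
    rw [List.map_map]
    conv_rhs => rw [← List.map_id (List.range L)]
    apply List.map_congr_left
    intro x hx
    simp only [Function.comp_apply, id]
    have hxL : x < L := List.mem_range.mp hx
    rw [Nat.mul_comm k L, Nat.mul_add_mod]
    exact Nat.mod_eq_of_lt hxL


open List

-- Lex with equal lengths extends to appends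
theorem lex_append {α : Type*} {r : α → α → Prop} :
    ∀ {u v : List α}, List.Lex r u v → u.length = v.length →
      ∀ (s t : List α), List.Lex r (u ++ s) (v ++ t) := by
  intro u v h
  induction h with
  | nil => intro hl; simp at hl
  | @cons a l₁ l₂ h ih =>
    intro hl s t
    exact List.Lex.cons (ih (by simpa using hl) s t)
  | @rel a l₁ b l₂ hab =>
    intro hl s t
    exact List.Lex.rel hab

theorem lt_wpow_mono {Γ : Type*} [LinearOrder Γ] {u v : List Γ} (h : u < v)
    (hl : u.length = v.length) (m : ℕ) (hm : 0 < m) : wpow u m < wpow v m := by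
  obtain ⟨k, rfl⟩ := Nat.exists_eq_add_of_lt hm
  rw [Nat.zero_add, wpow_succ, wpow_succ]
  exact (lex_append h hl _ _ : List.Lex (· < ·) _ _)

theorem le_wpow_mono {Γ : Type*} [LinearOrder Γ] {u v : List Γ} (h : u ≤ v)
    (hl : u.length = v.length) (m : ℕ) : wpow u m ≤ wpow v m := by
  rcases lt_or_eq_of_le h with h' | rfl
  · cases m with
    | zero => exact le_refl _
    | succ k => exact le_of_lt (lt_wpow_mono h' hl (k+1) (Nat.succ_pos k))
  · exact le_refl _

-- perm of wpow and flatMap replicate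
theorem count_wpow {α : Type*} [DecidableEq α] (x : α) (l : List α) (m : ℕ) :
    List.count x (wpow l m) = m * List.count x l := by
  induction m with
  | zero => simp [wpow]
  | succ k ih => rw [wpow_succ, List.count_append, ih, Nat.succ_mul]; omega

theorem count_flatMap_replicate {α : Type*} [DecidableEq α] (x : α) (l : List α) (m : ℕ) :
    List.count x (l.flatMap (fun y => List.replicate m y)) = m * List.count x l := by
  induction l with
  | nil => simp
  | cons a l ih =>
    rw [List.flatMap_cons, List.count_append, ih, List.count_cons, List.count_replicate]
    by_cases h : a = x <;> simp [h] <;> ring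

theorem perm_wpow_flatMap_replicate {α : Type*} (l : List α) (m : ℕ) :
    (wpow l m).Perm (l.flatMap (fun y => List.replicate m y)) := by
  classical
  rw [List.perm_iff_count]
  intro a
  rw [count_wpow, count_flatMap_replicate]

-- sortedness of flatMap replicate
theorem sorted_flatMap_replicate {Γ : Type*} [LinearOrder Γ] {l : List (List Γ)}
    (h : l.Pairwise (· ≤ ·)) (m : ℕ) :
    (l.flatMap (fun x => List.replicate m x)).Pairwise (· ≤ ·) := by
  rw [List.flatMap_def, List.pairwise_flatten]
  constructor
  · intro u hu
    rw [List.mem_map] at hu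
    obtain ⟨x, _, rfl⟩ := hu
    exact List.pairwise_replicate.mpr (Or.inr le_rfl)
  · rw [List.pairwise_map]
    apply h.imp_of_mem
    intro a b _ _ hab
    intro x hx y hy
    rw [List.eq_of_mem_replicate hx, List.eq_of_mem_replicate hy]
    exact hab

-- destutter lemmas
theorem destutter'_replicate_append {α : Type*} [DecidableEq α] (a : α) (k : ℕ) (rest : List α) :
    List.destutter' (· ≠ ·) a (List.replicate k a ++ rest) = List.destutter' (· ≠ ·) a rest := by
  induction k with
  | zero => simp
  | succ n ih =>
    rw [List.replicate_succ, List.cons_append,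
      List.destutter'_cons_neg _ (by simp : ¬ a ≠ a), ih]

theorem destutter'_flatMap_replicate {α : Type*} [DecidableEq α] (m : ℕ) (hm : 0 < m) :
    ∀ (l : List α) (a : α),
      List.destutter' (· ≠ ·) a (l.flatMap (fun x => List.replicate m x)) =
        List.destutter' (· ≠ ·) a l := by
  obtain ⟨k, rfl⟩ : ∃ k, m = k + 1 := ⟨m - 1, by omega⟩
  intro l
  induction l with
  | nil => intro a; simp
  | cons b l ih =>
    intro a
    rw [List.flatMap_cons]
    by_cases hab : a ≠ b
    · rw [List.replicate_succ, List.cons_append,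
        List.destutter'_cons_pos _ hab,
        destutter'_replicate_append, ih b, List.destutter'_cons_pos _ hab]
    · push_neg at hab
      subst hab
      rw [destutter'_replicate_append, ih a,
        List.destutter'_cons_neg _ (by simp : ¬ a ≠ a)]

theorem destutter_flatMap_replicate {α : Type*} [DecidableEq α] (m : ℕ) (hm : 0 < m)
    (l : List α) :
    List.destutter (· ≠ ·) (l.flatMap (fun x => List.replicate m x)) =
      List.destutter (· ≠ ·) l := by
  obtain ⟨k, rfl⟩ : ∃ k, m = k + 1 := ⟨m - 1, by omega⟩
  cases l with
  | nil => simp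
  | cons a l =>
    rw [List.flatMap_cons, List.replicate_succ, List.cons_append,
      List.destutter_cons', List.destutter_cons',
      destutter'_replicate_append, destutter'_flatMap_replicate (k+1) (Nat.succ_pos k)]

-- getLast? of a power
theorem getLast?_wpow {α : Type*} {u : List α} (hu : u ≠ []) {m : ℕ} (hm : 0 < m) :
    (wpow u m).getLast? = u.getLast? := by
  obtain ⟨k, rfl⟩ := Nat.exists_eq_add_of_lt hm
  rw [Nat.zero_add]
  rw [show wpow u (k+1) = wpow u k ++ u by simp [wpow, List.replicate_succ']]
  rw [List.getLast?_append]
  cases h : u.getLast? with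
  | none => exact absurd (List.getLast?_eq_none_iff.mp h) hu
  | some y => simp

theorem filterMap_replicate_some {α β : Type*} (f : α → Option β) {x : α} {y : β}
    (h : f x = some y) (m : ℕ) :
    List.filterMap f (List.replicate m x) = List.replicate m y := by
  induction m with
  | zero => simp
  | succ n ih =>
    rw [List.replicate_succ, List.filterMap_cons, h, ih, List.replicate_succ]

-- filterMap getLast? over blocks
theorem filterMap_getLast?_blocks {α : Type*} (m : ℕ) (hm : 0 < m) :
    ∀ (l : List (List α)), (∀ x ∈ l, x ≠ []) →
      List.filterMap List.getLast?
          ((l.map (fun u => wpow u m)).flatMap (fun x => List.replicate m x)) =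
        (l.filterMap List.getLast?).flatMap (fun y => List.replicate m y) := by
  intro l
  induction l with
  | nil => intro _; simp
  | cons u l ih =>
    intro hne
    have hu : u ≠ [] := hne u List.mem_cons_self
    cases h : u.getLast? with
    | none => exact absurd (List.getLast?_eq_none_iff.mp h) hu
    | some y =>
      have h1 : List.filterMap List.getLast? (List.replicate m (wpow u m)) =
          List.replicate m y := by
        have hg : (wpow u m).getLast? = some y := by rw [getLast?_wpow hu hm, h]
        exact filterMap_replicate_some _ hg m
      rw [List.map_cons, List.flatMap_cons, List.filterMap_append, h1,
        List.filterMap_cons, h, List.flatMap_cons,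
        ih (fun x hx => hne x (List.mem_cons_of_mem u hx))]


open List

-- placeholders for h1/h2 lemmas (assembled later); use axioms for now to test h3 alone
-- continue real development
theorem map_wpow {α β : Type*} (f : α → β) (l : List α) (m : ℕ) :
    (wpow l m).map f = wpow (l.map f) m := by
  simp [wpow, List.map_flatten, List.map_replicate]

/-- the unsorted rotation list of `w`, as in `bwt`. -/
def rotList {Γ : Type*} (w : List Γ) : List (List Γ) :=
  (List.range w.length).map (fun i => w.rotate i)

theorem bwt_eq {Γ : Type*} [LinearOrder Γ] (w : List Γ) :
    bwt w = (List.insertionSort (· ≤ ·) (rotList w)).filterMap List.getLast? := rfl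

theorem rotList_wpow {Γ : Type*} (z : List Γ) (m : ℕ) :
    rotList (wpow z m) =
      wpow ((rotList z).map (fun u => wpow u m)) m := by
  unfold rotList
  rw [length_wpow]
  have h1 : (List.range (m * z.length)).map (fun j => (wpow z m).rotate j)
      = (List.range (m * z.length)).map (fun j => wpow (z.rotate (j % z.length)) m) := by
    apply List.map_congr_left
    intro j _
    rw [rotate_wpow, List.rotate_mod]
  rw [h1]
  have h2 : (List.range (m * z.length)).map (fun j => wpow (z.rotate (j % z.length)) m)
      = ((List.range (m * z.length)).map (· % z.length)).map
          (fun r => wpow (z.rotate r) m) := by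
    rw [List.map_map]; rfl
  rw [h2, map_mod_range, map_wpow, List.map_map]
  rfl

theorem mem_sort_rotList {Γ : Type*} [LinearOrder Γ] {z u : List Γ}
    (hu : u ∈ List.insertionSort (· ≤ ·) (rotList z)) :
    ∃ i, u = z.rotate i := by
  have := (List.perm_insertionSort (· ≤ ·) (rotList z)).mem_iff.mp hu
  unfold rotList at this
  rw [List.mem_map] at this
  obtain ⟨i, _, rfl⟩ := this
  exact ⟨i, rfl⟩

theorem sort_rotList_wpow {Γ : Type*} [LinearOrder Γ] (z : List Γ) (m : ℕ) :
    List.insertionSort (· ≤ ·) (rotList (wpow z m)) =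
      ((List.insertionSort (· ≤ ·) (rotList z)).map (fun u => wpow u m)).flatMap
        (fun x => List.replicate m x) := by
  set S := List.insertionSort (· ≤ ·) (rotList z) with hS
  refine (fun hp h1 h2 => List.Perm.eq_of_pairwise' (r := (· ≤ ·)) h1 h2 hp) ?_ ?_ ?_
  · calc List.insertionSort (· ≤ ·) (rotList (wpow z m))
        ~ rotList (wpow z m) := List.perm_insertionSort _ _
      _ = wpow ((rotList z).map (fun u => wpow u m)) m := rotList_wpow z m
      _ ~ ((rotList z).map (fun u => wpow u m)).flatMap (fun x => List.replicate m x) :=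
          perm_wpow_flatMap_replicate _ m
      _ ~ (S.map (fun u => wpow u m)).flatMap (fun x => List.replicate m x) :=
          List.Perm.flatMap_right _ (((List.perm_insertionSort _ _).symm).map _)
  · exact List.pairwise_insertionSort _ _
  · apply sorted_flatMap_replicate
    rw [List.pairwise_map]
    apply (List.pairwise_insertionSort (· ≤ ·) (rotList z)).imp_of_mem
    intro a b ha hb hab
    have hla : a.length = z.length := by
      obtain ⟨i, rfl⟩ := mem_sort_rotList ha; exact List.length_rotate _ _
    have hlb : b.length = z.length := by
      obtain ⟨i, rfl⟩ := mem_sort_rotList hb; exact List.length_rotate _ _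
    exact le_wpow_mono hab (hla.trans hlb.symm) m

theorem bwt_wpow {Γ : Type*} [LinearOrder Γ] {z : List Γ} (hz : z ≠ []) {m : ℕ} (hm : 0 < m) :
    bwt (wpow z m) = (bwt z).flatMap (fun y => List.replicate m y) := by
  rw [bwt_eq, bwt_eq, sort_rotList_wpow]
  apply filterMap_getLast?_blocks m hm
  intro x hx
  obtain ⟨i, rfl⟩ := mem_sort_rotList hx
  simpa [List.rotate_eq_nil_iff] using hz

theorem rBWT_wpow {Γ : Type*} [LinearOrder Γ] {z : List Γ} (hz : z ≠ []) {m : ℕ} (hm : 0 < m) :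
    rBWT (wpow z m) = rBWT z := by
  unfold rBWT runCount
  rw [bwt_wpow hz hm, destutter_flatMap_replicate m hm]


open List
section Morph
variable {Γ : Type*} [LinearOrder Γ] (μ : Bool → List Γ) (z : List Γ) (t₁ t₂ : ℕ)

/-- exponent of `μ(w)` as a power of `z`. -/
def expo (w : List Bool) : ℕ := (w.map (fun c => cond c t₂ t₁)).sum

theorem mApply_eq_wpow (hμa : μ false = wpow z t₁) (hμb : μ true = wpow z t₂)
    (w : List Bool) : mApply μ w = wpow z (expo t₁ t₂ w) := by
  induction w with
  | nil => rfl
  | cons c w ih =>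
    have h1 : mApply μ (c :: w) = μ c ++ mApply μ w := rfl
    have h2 : expo t₁ t₂ (c :: w) = (cond c t₂ t₁) + expo t₁ t₂ w := rfl
    rw [h1, h2, wpow_add, ih]
    cases c
    · rw [hμa]; rfl
    · rw [hμb]; rfl

theorem expo_pos (ht₁ : 0 < t₁) (ht₂ : 0 < t₂) {w : List Bool} (hw : w ≠ []) :
    0 < expo t₁ t₂ w := by
  cases w with
  | nil => exact absurd rfl hw
  | cons c w =>
    have : expo t₁ t₂ (c :: w) = (cond c t₂ t₁) + expo t₁ t₂ w := rfl
    rw [this]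
    cases c <;> simp <;> omega

end Morph

theorem filterMap_getLast?_ne_nil {α : Type*} {l : List (List α)}
    (h : ∀ x ∈ l, x ≠ []) (hl : l ≠ []) : l.filterMap List.getLast? ≠ [] := by
  cases l with
  | nil => exact absurd rfl hl
  | cons x l =>
    have hx : x ≠ [] := h x List.mem_cons_self
    cases hg : x.getLast? with
    | none => exact absurd (List.getLast?_eq_none_iff.mp hg) hx
    | some y => rw [List.filterMap_cons, hg]; simp

theorem destutter'_ne_nil {α : Type*} (R : α → α → Prop) [DecidableRel R] :
    ∀ (l : List α) (a : α), List.destutter' R a l ≠ [] := by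
  intro l
  induction l with
  | nil => intro a; simp
  | cons b l ih =>
    intro a
    by_cases h : R a b
    · rw [List.destutter'_cons_pos _ h]; simp
    · rw [List.destutter'_cons_neg _ h]; exact ih a

theorem runCount_pos {Γ : Type*} [DecidableEq Γ] {l : List Γ} (hl : l ≠ []) :
    0 < runCount l := by
  cases l with
  | nil => exact absurd rfl hl
  | cons a l =>
    unfold runCount
    rw [List.destutter_cons']
    exact List.length_pos_iff.mpr (destutter'_ne_nil _ l a)

theorem bwt_ne_nil {Γ : Type*} [LinearOrder Γ] {w : List Γ} (hw : w ≠ []) : bwt w ≠ [] := by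
  unfold bwt
  apply filterMap_getLast?_ne_nil
  · intro x hx
    have := (List.perm_insertionSort (· ≤ ·) _).mem_iff.mp hx
    rw [List.mem_map] at this
    obtain ⟨i, _, rfl⟩ := this
    simpa [List.rotate_eq_nil_iff] using hw
  · intro h
    have := congrArg List.length h
    rw [List.length_insertionSort, List.length_map, List.length_range] at this
    simp at this
    exact hw this

theorem rBWT_pos {Γ : Type*} [LinearOrder Γ] {w : List Γ} (hw : w ≠ []) : 0 < rBWT w :=
  runCount_pos (bwt_ne_nil hw)

theorem rBWT_replicate_false {n : ℕ} (hn : 0 < n) :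
    rBWT (List.replicate n false) = 1 := by
  obtain ⟨k, rfl⟩ : ∃ k, n = k + 1 := ⟨n - 1, by omega⟩
  have h1 : (List.range (k+1)).map (fun i => (List.replicate (k+1) false).rotate i)
      = List.replicate (k+1) (List.replicate (k+1) false) := by
    rw [List.eq_replicate_iff]
    constructor
    · simp
    · intro b hb
      rw [List.mem_map] at hb
      obtain ⟨i, _, rfl⟩ := hb
      exact List.rotate_replicate false (k+1) i
  have h2 : List.insertionSort (· ≤ ·)
        (List.replicate (k+1) (List.replicate (k+1) false))
      = List.replicate (k+1) (List.replicate (k+1) false) :=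
    List.perm_replicate.mp (List.perm_insertionSort _ _)
  have h3 : (List.replicate (k+1) false).getLast? = some false := by
    rw [List.getLast?_replicate]; simp
  unfold rBWT bwt
  rw [List.length_replicate, h1, h2, filterMap_replicate_some _ h3]
  unfold runCount
  rw [List.replicate_succ, List.destutter_cons']
  have h4 := destutter'_replicate_append false k ([] : List Bool)
  rw [List.append_nil] at h4
  rw [h4]
  rfl


end BWTAux

theorem stmt8 {Γ : Type*} [LinearOrder Γ] (μ : Bool → List Γ)
    (z : List Γ) (t₁ t₂ : ℕ) (hz : z ≠ []) (ht₁ : 0 < t₁) (ht₂ : 0 < t₂)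
    (hμa : μ false = wpow z t₁) (hμb : μ true = wpow z t₂) :
    ∃ (kplus : ℤ) (ktimes : ℚ), ∀ n : ℕ, 2 ≤ n →
      ((∀ w : List Bool, w.length = n → (rBWT (mApply μ w) : ℤ) - rBWT w ≤ kplus) ∧
       (∃ w : List Bool, w.length = n ∧ (rBWT (mApply μ w) : ℤ) - rBWT w = kplus)) ∧
      ((∀ w : List Bool, w.length = n → (rBWT (mApply μ w) : ℚ) / rBWT w ≤ ktimes) ∧
       (∃ w : List Bool, w.length = n ∧ (rBWT (mApply μ w) : ℚ) / rBWT w = ktimes)) := by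
  classical
  set R := rBWT z with hR
  refine ⟨(R : ℤ) - 1, (R : ℚ), fun n hn => ?_⟩
  have key : ∀ w : List Bool, w.length = n → rBWT (mApply μ w) = R := by
    intro w hw
    have hwne : w ≠ [] := by
      intro h; rw [h] at hw; simp at hw; omega
    rw [BWTAux.mApply_eq_wpow μ z t₁ t₂ hμa hμb w]
    exact BWTAux.rBWT_wpow hz (BWTAux.expo_pos t₁ t₂ ht₁ ht₂ hwne)
  have hRpos : 0 < R := BWTAux.rBWT_pos hz
  have hwit : (List.replicate n false).length = n := List.length_replicate
  have hwit1 : rBWT (List.replicate n false) = 1 :=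
    BWTAux.rBWT_replicate_false (by omega)
  refine ⟨⟨fun w hw => ?_, List.replicate n false, hwit, ?_⟩,
          ⟨fun w hw => ?_, List.replicate n false, hwit, ?_⟩⟩
  · rw [key w hw]
    have hwne : w ≠ [] := by
      intro h; rw [h] at hw; simp at hw; omega
    have := BWTAux.rBWT_pos hwne
    have : (1 : ℤ) ≤ (rBWT w : ℤ) := by exact_mod_cast this
    omega
  · rw [key _ hwit, hwit1]; ring
  · rw [key w hw]
    have hwne : w ≠ [] := by
      intro h; rw [h] at hw; simp at hw; omega
    have h1 : (1 : ℚ) ≤ (rBWT w : ℚ) := by exact_mod_cast BWTAux.rBWT_pos hwne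
    exact div_le_self (by positivity) h1
  · rw [key _ hwit, hwit1]; simp
end

section
/- Let μ : {a,b}* → Γ* be an injective morphism, let φ = (ab, a) be the Fibonacci morphism, and let E = (b, a) be the exchange morphism. Then μ is a prefix morphism (neither of μ(a), μ(b) is a prefix of the other) if and only if for all morphisms ψ : {a,b}* → Γ* and χ : {a,b}* → {a,b}* such that μ = ψ ∘ χ, it holds that χ ∉ {φ, φ ∘ E}. -/
/-- The Fibonacci morphism `φ = (ab, a)`. -/
def phi : Bool → List Bool := fun c => bif c then [false] else [false, true]

/-- The composition `φ ∘ E = (a, ab)`. -/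
def phiE : Bool → List Bool := fun c => bif c then [false, true] else [false]

theorem exists_comp_phi_iff {Γ : Type*} (μ : Bool → List Γ) :
    (∃ ψ : Bool → List Γ, ∀ c, μ c = mApply ψ (phi c)) ↔ μ true <+: μ false := by
  constructor
  · rintro ⟨ψ, hψ⟩
    exact ⟨ψ true, by simp [hψ, mApply, phi]⟩
  · rintro ⟨t, ht⟩
    refine ⟨fun c => bif c then t else μ true, ?_⟩
    rintro (_ | _) <;> simp [mApply, phi, ht]

theorem exists_comp_phiE_iff {Γ : Type*} (μ : Bool → List Γ) :
    (∃ ψ : Bool → List Γ, ∀ c, μ c = mApply ψ (phiE c)) ↔ μ false <+: μ true := by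
  constructor
  · rintro ⟨ψ, hψ⟩
    exact ⟨ψ true, by simp [hψ, mApply, phiE]⟩
  · rintro ⟨t, ht⟩
    refine ⟨fun c => bif c then t else μ false, ?_⟩
    rintro (_ | _) <;> simp [mApply, phiE, ht]

theorem stmt17_general {Γ : Type*} (μ : Bool → List Γ) :
    (¬ μ false <+: μ true ∧ ¬ μ true <+: μ false) ↔
      ∀ (ψ : Bool → List Γ) (χ : Bool → List Bool),
        (∀ c, μ c = mApply ψ (χ c)) → (χ ≠ phi ∧ χ ≠ phiE) := by
  rw [← exists_comp_phiE_iff, ← exists_comp_phi_iff]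
  constructor
  · rintro ⟨hφE, hφ⟩ ψ χ hμ
    exact ⟨by rintro rfl; exact hφ ⟨ψ, hμ⟩, by rintro rfl; exact hφE ⟨ψ, hμ⟩⟩
  · intro h
    exact ⟨fun ⟨ψ, hψ⟩ => (h ψ phiE hψ).2 rfl, fun ⟨ψ, hψ⟩ => (h ψ phi hψ).1 rfl⟩

theorem stmt17 {Γ : Type*} (μ : Bool → List Γ) (hinj : Function.Injective (mApply μ)) :
    (¬ μ false <+: μ true ∧ ¬ μ true <+: μ false) ↔
      ∀ (ψ : Bool → List Γ) (χ : Bool → List Bool),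
        (∀ c, μ c = mApply ψ (χ c)) → (χ ≠ phi ∧ χ ≠ phiE) :=
  stmt17_general μ
end

section
/- Let μ : {a,b}* → Γ* be an injective morphism, let φ̃ = (ba, a), and let E = (b, a) be the exchange morphism. Then μ is a suffix morphism (neither of μ(a), μ(b) is a suffix of the other) if and only if for all morphisms ψ : {a,b}* → Γ* and χ : {a,b}* → {a,b}* such that μ = ψ ∘ χ, it holds that χ ∉ {φ̃, φ̃ ∘ E}. -/
/-- The morphism `φ̃ = (ba, a)`. -/
def phiT : Bool → List Bool := fun c => bif c then [false] else [true, false]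

/-- The composition `φ̃ ∘ E = (a, ba)`. -/
def phiTE : Bool → List Bool := fun c => bif c then [true, false] else [false]

/-- `μ = ψ ∘ φ̃` reads `μ(a) = ψ(b) ψ(a)` and `μ(b) = ψ(a)`; conversely, if `μ(a) = s μ(b)` take
`ψ = (μ(b), s)`. -/
theorem exists_comp_phiT_iff_suffix {Γ : Type*} (μ : Bool → List Γ) :
    (∃ ψ : Bool → List Γ, ∀ c, μ c = mApply ψ (phiT c)) ↔ μ true <:+ μ false := by
  constructor
  · rintro ⟨ψ, hψ⟩
    refine ⟨ψ true, ?_⟩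
    simp [hψ, mApply, phiT]
  · rintro ⟨s, hs⟩
    refine ⟨fun c => bif c then s else μ true, ?_⟩
    rintro (_ | _) <;> simp [mApply, phiT, hs]

theorem exists_comp_phiTE_iff_suffix {Γ : Type*} (μ : Bool → List Γ) :
    (∃ ψ : Bool → List Γ, ∀ c, μ c = mApply ψ (phiTE c)) ↔ μ false <:+ μ true := by
  constructor
  · rintro ⟨ψ, hψ⟩
    refine ⟨ψ true, ?_⟩
    simp [hψ, mApply, phiTE]
  · rintro ⟨s, hs⟩
    refine ⟨fun c => bif c then s else μ false, ?_⟩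
    rintro (_ | _) <;> simp [mApply, phiTE, hs]

theorem stmt18_general {Γ : Type*} (μ : Bool → List Γ) :
    (¬ μ false <:+ μ true ∧ ¬ μ true <:+ μ false) ↔
      ∀ (ψ : Bool → List Γ) (χ : Bool → List Bool),
        (∀ c, μ c = mApply ψ (χ c)) → (χ ≠ phiT ∧ χ ≠ phiTE) := by
  rw [← exists_comp_phiTE_iff_suffix, ← exists_comp_phiT_iff_suffix]
  constructor
  · rintro ⟨hnotE, hnot⟩ ψ χ hψ
    exact ⟨by rintro rfl; exact hnot ⟨ψ, hψ⟩, by rintro rfl; exact hnotE ⟨ψ, hψ⟩⟩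
  · intro h
    exact ⟨fun ⟨ψ, hψ⟩ => (h ψ _ hψ).2 rfl, fun ⟨ψ, hψ⟩ => (h ψ _ hψ).1 rfl⟩

theorem stmt18 {Γ : Type*} (μ : Bool → List Γ) (hinj : Function.Injective (mApply μ)) :
    (¬ μ false <:+ μ true ∧ ¬ μ true <:+ μ false) ↔
      ∀ (ψ : Bool → List Γ) (χ : Bool → List Bool),
        (∀ c, μ c = mApply ψ (χ c)) → (χ ≠ phiT ∧ χ ≠ phiTE) :=
  stmt18_general μ
end

section
/- Let μ : {a,b}* → Γ* be an injective morphism, let φ = (ab, a), φ̃ = (ba, a), and let E = (b, a) be the exchange morphism. Then μ is bifix (neither of μ(a), μ(b) is a prefix of the other, and neither is a suffix of the other) if and only if for all morphisms ψ : {a,b}* → Γ* and χ : {a,b}* → {a,b}* such that μ = ψ ∘ χ, it holds that χ ∉ {φ, φ ∘ E, φ̃, φ̃ ∘ E}. -/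
def FactorsThrough {Γ : Type*} (μ : Bool → List Γ) (χ : Bool → List Bool) : Prop :=
  ∃ ψ : Bool → List Γ, ∀ c, μ c = mApply ψ (χ c)

section

variable {Γ : Type*} (μ : Bool → List Γ)

theorem factorsThrough_phi_iff : FactorsThrough μ phi ↔ μ true <+: μ false := by
  constructor
  · rintro ⟨ψ, hψ⟩
    rw [hψ, hψ]
    simp [mApply, phi]
  · rintro ⟨v, hv⟩
    exact ⟨fun c => bif c then v else μ true, by rintro (_ | _) <;> simp [mApply, phi, hv]⟩

theorem factorsThrough_phiE_iff : FactorsThrough μ phiE ↔ μ false <+: μ true := by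
  constructor
  · rintro ⟨ψ, hψ⟩
    rw [hψ, hψ]
    simp [mApply, phiE]
  · rintro ⟨v, hv⟩
    exact ⟨fun c => bif c then v else μ false, by rintro (_ | _) <;> simp [mApply, phiE, hv]⟩

theorem factorsThrough_phiT_iff : FactorsThrough μ phiT ↔ μ true <:+ μ false := by
  constructor
  · rintro ⟨ψ, hψ⟩
    rw [hψ, hψ]
    simp [mApply, phiT]
  · rintro ⟨v, hv⟩
    exact ⟨fun c => bif c then v else μ true, by rintro (_ | _) <;> simp [mApply, phiT, hv]⟩

theorem factorsThrough_phiTE_iff : FactorsThrough μ phiTE ↔ μ false <:+ μ true := by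
  constructor
  · rintro ⟨ψ, hψ⟩
    rw [hψ, hψ]
    simp [mApply, phiTE]
  · rintro ⟨v, hv⟩
    exact ⟨fun c => bif c then v else μ false, by rintro (_ | _) <;> simp [mApply, phiTE, hv]⟩

end

theorem stmt19_general {Γ : Type*} (μ : Bool → List Γ) :
    (¬ μ false <+: μ true ∧ ¬ μ true <+: μ false ∧
     ¬ μ false <:+ μ true ∧ ¬ μ true <:+ μ false) ↔
      ∀ (ψ : Bool → List Γ) (χ : Bool → List Bool),
        (∀ c, μ c = mApply ψ (χ c)) →
          (χ ≠ phi ∧ χ ≠ phiE ∧ χ ≠ phiT ∧ χ ≠ phiTE) := by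
  rw [← factorsThrough_phi_iff, ← factorsThrough_phiE_iff, ← factorsThrough_phiT_iff,
    ← factorsThrough_phiTE_iff]
  constructor
  · rintro ⟨hE, h, hTE, hT⟩ ψ χ hψ
    refine ⟨?_, ?_, ?_, ?_⟩ <;> rintro rfl
    exacts [h ⟨ψ, hψ⟩, hE ⟨ψ, hψ⟩, hT ⟨ψ, hψ⟩, hTE ⟨ψ, hψ⟩]
  · intro h
    refine ⟨?_, ?_, ?_, ?_⟩ <;> rintro ⟨ψ, hψ⟩
    exacts [(h ψ _ hψ).2.1 rfl, (h ψ _ hψ).1 rfl, (h ψ _ hψ).2.2.2 rfl, (h ψ _ hψ).2.2.1 rfl]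

theorem stmt19 {Γ : Type*} (μ : Bool → List Γ) (hinj : Function.Injective (mApply μ)) :
    (¬ μ false <+: μ true ∧ ¬ μ true <+: μ false ∧
     ¬ μ false <:+ μ true ∧ ¬ μ true <:+ μ false) ↔
      ∀ (ψ : Bool → List Γ) (χ : Bool → List Bool),
        (∀ c, μ c = mApply ψ (χ c)) →
          (χ ≠ phi ∧ χ ≠ phiE ∧ χ ≠ phiT ∧ χ ≠ phiTE) :=
  stmt19_general μ
end
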